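/- Let (p̲_i, p̄_i)_{i=1}^n be a coherent probability interval and let c_1 ≤ c_2 ≤ … ≤ c_n be real numbers. Let ĩ be the least index i such that Σ_{h ≤ i} p̄_h + Σ_{h > i} p̲_h ≥ 1, and set x_ĩ = 1 − Σ_{h < ĩ} p̄_h − Σ_{h > ĩ} p̲_h. Then x_ĩ ∈ [p̲_ĩ, p̄_ĩ], and the minimum of Σ_{i=1}^n c_i x_i over all (x_1,…,x_n) with p̲_i ≤ x_i ≤ p̄_i and Σ_i x_i = 1 equals Σ_{i < ĩ} c_i p̄_i + c_ĩ x_ĩ + Σ_{i > ĩ} c_i p̲_i. -/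
import Mathlib


open Finset

/-- A Dempster–Shafer mass function on the finite type `α`:
nonnegative, at most one, vanishing on `∅`, and summing to one. -/
def IsMass {α : Type*} [Fintype α] [DecidableEq α] (m : Finset α → ℝ) : Prop :=
  m ∅ = 0 ∧ (∀ V : Finset α, 0 ≤ m V ∧ m V ≤ 1) ∧ (∑ V : Finset α, m V) = 1

/-- The belief function associated to a mass function: `Bel m W = ∑_{V ⊆ W} m V`. -/
def Bel {α : Type*} [Fintype α] [DecidableEq α] (m : Finset α → ℝ) (W : Finset α) : ℝ :=
  ∑ V ∈ Finset.univ.filter (fun V : Finset α => V ⊆ W), m V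

/-- The plausibility function associated to a mass function:
`Pl m W = ∑_{V ∩ W ≠ ∅} m V`. -/
def Pl {α : Type*} [Fintype α] [DecidableEq α] (m : Finset α → ℝ) (W : Finset α) : ℝ :=
  ∑ V ∈ Finset.univ.filter (fun V : Finset α => (V ∩ W).Nonempty), m V

/-- A coherent probability interval `(lo i, hi i)_{i}` on `Fin n`:
componentwise bounds `0 ≤ lo ≤ hi ≤ 1`, together with [Coh1], [Coh2], [Coh3]. -/
def IsCoherent {n : ℕ} (lo hi : Fin n → ℝ) : Prop :=
  (∀ i, 0 ≤ lo i ∧ lo i ≤ hi i ∧ hi i ≤ 1) ∧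
  (∑ i, lo i) ≤ 1 ∧ 1 ≤ (∑ i, hi i) ∧
  (∀ i, 1 - ∑ h ∈ Finset.univ.erase i, hi h ≤ lo i) ∧
  (∀ i, hi i ≤ 1 - ∑ h ∈ Finset.univ.erase i, lo h)

/-- `Δ = S̄ + (n-2)S̲ - (n-1)` for a probability interval. -/
def intervalDelta {n : ℕ} (lo hi : Fin n → ℝ) : ℝ :=
  (∑ i, hi i) + ((n : ℝ) - 2) * (∑ i, lo i) - ((n : ℝ) - 1)

/-- A *good* coherent probability interval: coherent and `Δ ≥ 0`. -/
def IsGood {n : ℕ} (lo hi : Fin n → ℝ) : Prop :=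
  IsCoherent lo hi ∧ 0 ≤ intervalDelta lo hi

/-- The standard good mass (SGM) associated to a (good coherent) probability interval:
mass `lo i` on each singleton `{a_i}`, mass `1 - hi i - ∑_{h ≠ i} lo h` on each
complement `univ ∖ {a_i}`, mass `Δ` on `univ`, and `0` on every other set. -/
def SGM {n : ℕ} (lo hi : Fin n → ℝ) (V : Finset (Fin n)) : ℝ :=
  (∑ i ∈ Finset.univ.filter (fun i : Fin n => V = {i}), lo i)
  + (∑ i ∈ Finset.univ.filter (fun i : Fin n => V = Finset.univ \ {i}),
      (1 - hi i - ∑ h ∈ Finset.univ.erase i, lo h))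
  + (if V = Finset.univ then intervalDelta lo hi else 0)

/-- Let `(lo, hi)` be a coherent probability interval on `Fin n` and
`c` a monotone (increasing) family of coefficients. Let `i₀` be the least index
with `∑_{h ≤ i₀} hi h + ∑_{h > i₀} lo h ≥ 1`, and set
`x_{i₀} = 1 - ∑_{h < i₀} hi h - ∑_{h > i₀} lo h`. Then `x_{i₀} ∈ [lo i₀, hi i₀]`,
and the minimum of `∑ᵢ cᵢ xᵢ` over all `x` with `lo i ≤ x i ≤ hi i` and
`∑ᵢ xᵢ = 1` equals `∑_{i < i₀} cᵢ · hi i + c_{i₀} · x_{i₀} + ∑_{i > i₀} cᵢ · lo i`. -/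

lemma fin_sum_split {n : ℕ} (i₀ : Fin n) (f : Fin n → ℝ) :
    ∑ i, f i = (∑ i ∈ Finset.Iio i₀, f i) + f i₀ + ∑ i ∈ Finset.Ioi i₀, f i := by
  have h1 : Finset.Iic i₀ ∪ Finset.Ioi i₀ = Finset.univ := by
    ext x; simp [le_or_gt]
  have hd : Disjoint (Finset.Iic i₀) (Finset.Ioi i₀) := by
    simp [Finset.disjoint_left]
  have h2 : ∑ i, f i = (∑ i ∈ Finset.Iic i₀, f i) + ∑ i ∈ Finset.Ioi i₀, f i := by
    rw [← Finset.sum_union hd, h1]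
  have h3 : ∑ i ∈ Finset.Iic i₀, f i = f i₀ + ∑ i ∈ Finset.Iio i₀, f i := by
    rw [← Finset.Iio_insert, Finset.sum_insert (by simp)]
  rw [h2, h3]; ring

theorem credal_linear_minimum (n : ℕ) (lo hi : Fin n → ℝ)
    (hcoh : IsCoherent lo hi) (c : Fin n → ℝ) (hc : Monotone c) (i₀ : Fin n)
    (h₁ : 1 ≤ (∑ h ∈ Finset.Iic i₀, hi h) + ∑ h ∈ Finset.Ioi i₀, lo h)
    (h₂ : ∀ i < i₀, (∑ h ∈ Finset.Iic i, hi h) + (∑ h ∈ Finset.Ioi i, lo h) < 1) :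
    (lo i₀ ≤ 1 - (∑ h ∈ Finset.Iio i₀, hi h) - ∑ h ∈ Finset.Ioi i₀, lo h) ∧
    (1 - (∑ h ∈ Finset.Iio i₀, hi h) - (∑ h ∈ Finset.Ioi i₀, lo h) ≤ hi i₀) ∧
    IsLeast
      {r : ℝ | ∃ x : Fin n → ℝ, (∀ i, lo i ≤ x i ∧ x i ≤ hi i) ∧ (∑ i, x i) = 1 ∧
        r = ∑ i, c i * x i}
      ((∑ i ∈ Finset.Iio i₀, c i * hi i)
        + c i₀ * (1 - (∑ h ∈ Finset.Iio i₀, hi h) - ∑ h ∈ Finset.Ioi i₀, lo h)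
        + ∑ i ∈ Finset.Ioi i₀, c i * lo i) := by
  obtain ⟨hb, hS1, hS2, hcoh2, hcoh3⟩ := hcoh
  set xs : ℝ := 1 - (∑ h ∈ Finset.Iio i₀, hi h) - ∑ h ∈ Finset.Ioi i₀, lo h with hxs
  have hxhi : xs ≤ hi i₀ := by
    have : ∑ h ∈ Finset.Iic i₀, hi h = hi i₀ + ∑ h ∈ Finset.Iio i₀, hi h := by
      rw [← Finset.Iio_insert, Finset.sum_insert (by simp)]
    rw [hxs]; linarith [h₁, this ▸ h₁]
  have hxlo : lo i₀ ≤ xs := by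
    rcases eq_or_ne (i₀ : ℕ) 0 with h0 | h0
    · have hIio : Finset.Iio i₀ = ∅ := by
        ext x; simp [Fin.lt_def, h0]
      have hsub : Finset.Ici i₀ ⊆ Finset.univ := Finset.subset_univ _
      have h4 : ∑ h ∈ Finset.Ici i₀, lo h ≤ ∑ h, lo h :=
        Finset.sum_le_sum_of_subset_of_nonneg hsub fun i _ _ => (hb i).1
      have h5 : ∑ h ∈ Finset.Ici i₀, lo h = lo i₀ + ∑ h ∈ Finset.Ioi i₀, lo h := by
        rw [← Finset.Ioi_insert, Finset.sum_insert (by simp)]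
      rw [hxs, hIio]; simp only [Finset.sum_empty]; linarith
    · have hn : 0 < n := i₀.pos
      have hjlt : (i₀ : ℕ) - 1 < n := by omega
      set j : Fin n := ⟨(i₀ : ℕ) - 1, hjlt⟩ with hj
      have hji : j < i₀ := by simp [Fin.lt_def, hj]; omega
      have hjv : (j : ℕ) = (i₀ : ℕ) - 1 := rfl
      have hIic : Finset.Iic j = Finset.Iio i₀ := by
        ext x
        simp only [Finset.mem_Iic, Finset.mem_Iio, Fin.le_def, Fin.lt_def, hjv]
        omega
      have hIoi : Finset.Ioi j = Finset.Ici i₀ := by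
        ext x
        simp only [Finset.mem_Ioi, Finset.mem_Ici, Fin.le_def, Fin.lt_def, hjv]
        omega
      have h5 : ∑ h ∈ Finset.Ici i₀, lo h = lo i₀ + ∑ h ∈ Finset.Ioi i₀, lo h := by
        rw [← Finset.Ioi_insert, Finset.sum_insert (by simp)]
      have := h₂ j hji
      rw [hIic, hIoi, h5] at this
      rw [hxs]; linarith
  refine ⟨hxlo, hxhi, ?_, ?_⟩
  · -- membership
    refine ⟨fun i => if i < i₀ then hi i else if i = i₀ then xs else lo i, ?_, ?_, ?_⟩
    · intro i
      rcases lt_trichotomy i i₀ with h | h | h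
      · simp only [if_pos h]; exact ⟨(hb i).2.1, le_refl _⟩
      · subst h; simp only [lt_irrefl, if_neg (lt_irrefl i), if_pos rfl]
        exact ⟨hxlo, hxhi⟩
      · simp only [if_neg (not_lt.mpr h.le), if_neg h.ne']
        exact ⟨le_refl _, (hb i).2.1⟩
    · rw [fin_sum_split i₀]
      have e1 : ∑ i ∈ Finset.Iio i₀, (if i < i₀ then hi i else if i = i₀ then xs else lo i)
          = ∑ i ∈ Finset.Iio i₀, hi i := by
        apply Finset.sum_congr rfl; intro i hi'
        rw [Finset.mem_Iio] at hi'; simp [hi']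
      have e2 : ∑ i ∈ Finset.Ioi i₀, (if i < i₀ then hi i else if i = i₀ then xs else lo i)
          = ∑ i ∈ Finset.Ioi i₀, lo i := by
        apply Finset.sum_congr rfl; intro i hi'
        rw [Finset.mem_Ioi] at hi'; simp [not_lt.mpr hi'.le, hi'.ne']
      rw [e1, e2]
      simp only [lt_irrefl, if_false, if_true]
      rw [hxs]; ring
    · rw [fin_sum_split i₀]
      have e1 : ∑ i ∈ Finset.Iio i₀, c i * (if i < i₀ then hi i else if i = i₀ then xs else lo i)
          = ∑ i ∈ Finset.Iio i₀, c i * hi i := by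
        apply Finset.sum_congr rfl; intro i hi'
        rw [Finset.mem_Iio] at hi'; simp [hi']
      have e2 : ∑ i ∈ Finset.Ioi i₀, c i * (if i < i₀ then hi i else if i = i₀ then xs else lo i)
          = ∑ i ∈ Finset.Ioi i₀, c i * lo i := by
        apply Finset.sum_congr rfl; intro i hi'
        rw [Finset.mem_Ioi] at hi'; simp [not_lt.mpr hi'.le, hi'.ne']
      rw [e1, e2]
      have : (fun i => if i < i₀ then hi i else if i = i₀ then xs else lo i) i₀ = xs := by
        show (if i₀ < i₀ then hi i₀ else if i₀ = i₀ then xs else lo i₀) = xs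
        rw [if_neg (lt_irrefl i₀), if_pos rfl]
      rw [this]
  · -- lower bound
    rintro r ⟨x, hx, hsum, rfl⟩
    set y : Fin n → ℝ := fun i => if i < i₀ then hi i else if i = i₀ then xs else lo i with hy
    have hys : ∑ i, y i = 1 := by
      rw [fin_sum_split i₀]
      have e1 : ∑ i ∈ Finset.Iio i₀, y i = ∑ i ∈ Finset.Iio i₀, hi i := by
        apply Finset.sum_congr rfl; intro i hi'
        rw [Finset.mem_Iio] at hi'; simp [hy, hi']
      have e2 : ∑ i ∈ Finset.Ioi i₀, y i = ∑ i ∈ Finset.Ioi i₀, lo i := by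
        apply Finset.sum_congr rfl; intro i hi'
        rw [Finset.mem_Ioi] at hi'; simp [hy, not_lt.mpr hi'.le, hi'.ne']
      have e3 : y i₀ = xs := by simp [hy]
      rw [e1, e2, e3, hxs]; ring
    have hcy : ∑ i, c i * y i
        = (∑ i ∈ Finset.Iio i₀, c i * hi i) + c i₀ * xs + ∑ i ∈ Finset.Ioi i₀, c i * lo i := by
      rw [fin_sum_split i₀ (fun i => c i * y i)]
      have e1 : ∑ i ∈ Finset.Iio i₀, c i * y i = ∑ i ∈ Finset.Iio i₀, c i * hi i := by
        apply Finset.sum_congr rfl; intro i hi'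
        rw [Finset.mem_Iio] at hi'; simp [hy, hi']
      have e2 : ∑ i ∈ Finset.Ioi i₀, c i * y i = ∑ i ∈ Finset.Ioi i₀, c i * lo i := by
        apply Finset.sum_congr rfl; intro i hi'
        rw [Finset.mem_Ioi] at hi'; simp [hy, not_lt.mpr hi'.le, hi'.ne']
      have e3 : y i₀ = xs := by simp [hy]
      rw [e1, e2, e3]
    rw [← hcy]
    have key : ∀ i, c i₀ * (x i - y i) ≤ c i * (x i - y i) := by
      intro i
      rcases lt_trichotomy i i₀ with h | h | h
      · have hyi : y i = hi i := by simp [hy, h]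
        have hd : x i - y i ≤ 0 := by rw [hyi]; linarith [(hx i).2]
        exact mul_le_mul_of_nonpos_right (hc h.le) hd
      · subst h; exact le_refl _
      · have hyi : y i = lo i := by simp [hy, not_lt.mpr h.le, h.ne']
        have hd : 0 ≤ x i - y i := by rw [hyi]; linarith [(hx i).1]
        exact mul_le_mul_of_nonneg_right (hc h.le) hd
    have h6 : ∑ i, c i₀ * (x i - y i) ≤ ∑ i, c i * (x i - y i) :=
      Finset.sum_le_sum fun i _ => key i
    have h7 : ∑ i, c i₀ * (x i - y i) = c i₀ * ((∑ i, x i) - ∑ i, y i) := by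
      rw [← Finset.mul_sum, Finset.sum_sub_distrib]
    have h8 : ∑ i, c i * (x i - y i) = (∑ i, c i * x i) - ∑ i, c i * y i := by
      rw [← Finset.sum_sub_distrib]; apply Finset.sum_congr rfl; intros; ring
    rw [h7, hsum, hys] at h6
    rw [h8] at h6
    simp at h6
    linarith
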